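/- A primitive symbolic substitution system (𝒜, σ) in which some letter a satisfies |σ(a)| > 1 admits an orbit: there exists a bi-infinite sequence of bi-infinite words (ω^i)_{i∈ℤ} and monotone surjective maps P_i : ℤ → ℤ such that ω^i produces ω^{i+1} with respect to P_i. -/

import Mathlib

/-- `ω` produces `ω'` with respect to the monotone surjective parent function
`P`. -/
def Produces {A : Type*} (σ : A → List A) (ω ω' : ℤ → A) (P : ℤ → ℤ) : Prop :=
  Monotone P ∧ Function.Surjective P ∧
  ∀ j m M : ℤ, IsLeast {s | P s = j} m → IsGreatest {s | P s = j} M →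
    M - m + 1 = ((σ (ω j)).length : ℤ) ∧
    ∀ t, m ≤ t → t ≤ M → ω' t = (σ (ω j)).getD (t - m).toNat (ω j)

namespace OrbitProof
open List Function

variable {A : Type*}

/-- blockwise substitution on finite words -/
def B (σ : A → List A) : List A → List A := fun u => u.flatMap σ

lemma B_nil (σ : A → List A) : B σ [] = [] := rfl

lemma B_cons (σ : A → List A) (x : A) (l : List A) : B σ (x :: l) = σ x ++ B σ l := rfl

lemma B_append (σ : A → List A) (l₁ l₂ : List A) : B σ (l₁ ++ l₂) = B σ l₁ ++ B σ l₂ :=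
  List.flatMap_append

lemma B_iter_append (σ : A → List A) (n : ℕ) (l₁ l₂ : List A) :
    (B σ)^[n] (l₁ ++ l₂) = (B σ)^[n] l₁ ++ (B σ)^[n] l₂ := by
  induction n with
  | zero => simp
  | succ n ih => simp only [Function.iterate_succ_apply', ih, B_append]

lemma B_iter_prefix (σ : A → List A) (n : ℕ) {l₁ l₂ : List A} (h : l₁ <+: l₂) :
    (B σ)^[n] l₁ <+: (B σ)^[n] l₂ := by
  obtain ⟨r, rfl⟩ := h
  exact ⟨(B σ)^[n] r, (B_iter_append σ n l₁ r).symm⟩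

variable {σ : A → List A}

lemma B_ne (hne : ∀ a, σ a ≠ []) {l : List A} (h : l ≠ []) : B σ l ≠ [] := by
  cases l with
  | nil => exact absurd rfl h
  | cons x xs =>
    simp only [B_cons]
    intro hc
    exact hne x (List.append_eq_nil_iff.mp hc).1

lemma B_iter_ne (hne : ∀ a, σ a ≠ []) (n : ℕ) {l : List A} (h : l ≠ []) :
    (B σ)^[n] l ≠ [] := by
  induction n with
  | zero => exact h
  | succ n ih => rw [Function.iterate_succ_apply']; exact B_ne hne ih

lemma length_le_B (hne : ∀ a, σ a ≠ []) (l : List A) : l.length ≤ (B σ l).length := by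
  induction l with
  | nil => simp [B_nil]
  | cons x xs ih =>
    rw [B_cons, List.length_append, List.length_cons]
    have : 1 ≤ (σ x).length := List.length_pos_iff.mpr (hne x)
    omega

lemma length_le_B_iter (hne : ∀ a, σ a ≠ []) (n : ℕ) (l : List A) :
    l.length ≤ ((B σ)^[n] l).length := by
  induction n with
  | zero => simp
  | succ n ih =>
    rw [Function.iterate_succ_apply']
    exact ih.trans (length_le_B hne _)

lemma length_B_ge_of_mem (hne : ∀ a, σ a ≠ []) {a : A} {l : List A} (h : a ∈ l) :
    (σ a).length ≤ (B σ l).length := by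
  obtain ⟨l₁, l₂, rfl⟩ := List.append_of_mem h
  rw [B_append, B_cons]
  simp only [List.length_append]
  omega

/-- σ with blocks reversed; governs the left half. -/
def σrev (σ : A → List A) : A → List A := fun a => (σ a).reverse

lemma B_rev (l : List A) : B (σrev σ) l.reverse = (B σ l).reverse := by
  induction l with
  | nil => simp [B_nil]
  | cons x xs ih =>
    simp only [List.reverse_cons, B_append, B_cons, ih, List.reverse_append]
    simp [σrev, B]

lemma B_iter_rev (n : ℕ) (l : List A) :
    (B (σrev σ))^[n] l.reverse = ((B σ)^[n] l).reverse := by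
  induction n with
  | zero => simp
  | succ n ih => simp only [Function.iterate_succ_apply', ih, B_rev]

lemma hne_rev (hne : ∀ a, σ a ≠ []) : ∀ a, σrev σ a ≠ [] := by
  intro a h
  exact hne a (by simpa [σrev] using congrArg List.reverse h)


open List Function

variable {A : Type*}

section Start

variable (σ : A → List A)

/-- cumulative block lengths to the right of 0 -/
def startR (u : ℤ → A) : ℕ → ℤ
  | 0 => 0
  | n + 1 => startR u n + ((σ (u n)).length : ℤ)

/-- cumulative block lengths to the left of 0 -/
def startL (u : ℤ → A) : ℕ → ℤ
  | 0 => 0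
  | n + 1 => startL u n - ((σ (u (-1 - n))).length : ℤ)

/-- the start position of the block of `j` in the image word -/
def start (u : ℤ → A) (j : ℤ) : ℤ :=
  if 0 ≤ j then startR σ u j.toNat else startL σ u (-j).toNat

lemma start_zero (u : ℤ → A) : start σ u 0 = 0 := by simp [start, startR]

lemma start_succ (u : ℤ → A) (j : ℤ) :
    start σ u (j + 1) = start σ u j + ((σ (u j)).length : ℤ) := by
  rcases le_or_gt 0 j with hj | hj
  · have h1 : 0 ≤ j + 1 := by omega
    rw [start, start, if_pos h1, if_pos hj]
    have ht : (j + 1).toNat = j.toNat + 1 := by omega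
    have hj' : ((j.toNat : ℤ)) = j := by omega
    rw [ht, startR, hj']
  · rcases eq_or_lt_of_le (by omega : j + 1 ≤ 0) with h0 | h0
    · have hj1 : j = -1 := by omega
      subst hj1
      simp [start, startR, startL]
    · rw [start, start, if_neg (by omega), if_neg (by omega)]
      have h2 : (-j).toNat = (-(j + 1)).toNat + 1 := by omega
      rw [h2, startL]
      have h3 : (-1 - ((-(j+1)).toNat : ℤ)) = j := by omega
      rw [h3]
      ring

variable {σ}

lemma start_lt_succ (hne : ∀ a, σ a ≠ []) (u : ℤ → A) (j : ℤ) :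
    start σ u j < start σ u (j + 1) := by
  rw [start_succ]
  have : 1 ≤ (σ (u j)).length := List.length_pos_iff.mpr (hne (u j))
  omega

lemma start_strictMono (hne : ∀ a, σ a ≠ []) (u : ℤ → A) : StrictMono (start σ u) :=
  strictMono_int_of_lt_succ (start_lt_succ hne u)

lemma start_ge (hne : ∀ a, σ a ≠ []) (u : ℤ → A) {j : ℤ} (hj : 0 ≤ j) :
    j ≤ start σ u j := by
  have key : ∀ n : ℕ, (n : ℤ) ≤ start σ u n := by
    intro n
    induction n with
    | zero => simp [start_zero]
    | succ n ih =>
      have := start_lt_succ hne u (n : ℤ)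
      push_cast
      omega
  have := key j.toNat
  rwa [Int.toNat_of_nonneg hj] at this

lemma start_le (hne : ∀ a, σ a ≠ []) (u : ℤ → A) {j : ℤ} (hj : j ≤ 0) :
    start σ u j ≤ j := by
  have key : ∀ n : ℕ, start σ u (-(n:ℤ)) ≤ -(n:ℤ) := by
    intro n
    induction n with
    | zero => simp [start_zero]
    | succ n ih =>
      have := start_lt_succ hne u (-(n:ℤ) - 1)
      have h2 : (-(n:ℤ) - 1) + 1 = -(n:ℤ) := by ring
      rw [h2] at this
      have h3 : (-((n:ℕ)+1:ℕ) : ℤ) = -(n:ℤ) - 1 := by push_cast; ring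
      rw [h3]
      omega
  have := key (-j).toNat
  have h4 : (-((-j).toNat) : ℤ) = j := by omega
  rwa [h4] at this

lemma exists_greatest_start (hne : ∀ a, σ a ≠ []) (u : ℤ → A) (t : ℤ) :
    ∃ j, start σ u j ≤ t ∧ ∀ z, start σ u z ≤ t → z ≤ j := by
  refine Int.exists_greatest_of_bdd ⟨max 0 t + 1, ?_⟩ ?_
  · intro z hz
    rcases le_or_gt 0 z with h0 | h0
    · have := start_ge hne u h0
      omega
    · omega
  · refine ⟨min 0 t, ?_⟩
    have h0 : min 0 t ≤ 0 := by omega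
    have := start_le hne u h0
    omega

/-- the parent map: `Pa u t` is the greatest `j` with `start u j ≤ t`. -/
noncomputable def Pa (hne : ∀ a, σ a ≠ []) (u : ℤ → A) (t : ℤ) : ℤ :=
  (exists_greatest_start hne u t).choose

lemma Pa_spec (hne : ∀ a, σ a ≠ []) (u : ℤ → A) (t : ℤ) :
    start σ u (Pa hne u t) ≤ t ∧ t < start σ u (Pa hne u t + 1) := by
  have hc := (exists_greatest_start hne u t).choose_spec
  rw [show (exists_greatest_start hne u t).choose = Pa hne u t from rfl] at hc
  obtain ⟨h1, h2⟩ := hc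
  refine ⟨h1, ?_⟩
  by_contra h
  push_neg at h
  have := h2 _ h
  omega

lemma Pa_max (hne : ∀ a, σ a ≠ []) (u : ℤ → A) (t : ℤ) :
    ∀ z, start σ u z ≤ t → z ≤ Pa hne u t :=
  (exists_greatest_start hne u t).choose_spec.2

lemma Pa_eq (hne : ∀ a, σ a ≠ []) (u : ℤ → A) {t j : ℤ}
    (h1 : start σ u j ≤ t) (h2 : t < start σ u (j + 1)) : Pa hne u t = j := by
  obtain ⟨hm, _⟩ := Pa_spec hne u t
  have hle : j ≤ Pa hne u t := Pa_max hne u t j h1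
  have hlt : Pa hne u t < j + 1 := by
    by_contra hcon
    push_neg at hcon
    have := (start_strictMono hne u).monotone hcon
    omega
  omega

lemma Pa_monotone (hne : ∀ a, σ a ≠ []) (u : ℤ → A) : Monotone (Pa hne u) := by
  intro s t hst
  obtain ⟨h1, _⟩ := Pa_spec hne u s
  exact Pa_max hne u t _ (h1.trans hst)

lemma Pa_surjective (hne : ∀ a, σ a ≠ []) (u : ℤ → A) : Function.Surjective (Pa hne u) :=
  fun j => ⟨start σ u j, Pa_eq hne u le_rfl (start_lt_succ hne u j)⟩

/-- the canonical σ-image of a bi-infinite word, anchored at 0 -/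
noncomputable def Im (hne : ∀ a, σ a ≠ []) (u : ℤ → A) : ℤ → A :=
  fun t => (σ (u (Pa hne u t))).getD (t - start σ u (Pa hne u t)).toNat (u (Pa hne u t))

lemma Im_eq (hne : ∀ a, σ a ≠ []) (u : ℤ → A) {t j : ℤ}
    (h1 : start σ u j ≤ t) (h2 : t < start σ u (j + 1)) :
    Im hne u t = (σ (u j)).getD (t - start σ u j).toNat (u j) := by
  rw [Im, Pa_eq hne u h1 h2]

lemma isLeast_fiber (hne : ∀ a, σ a ≠ []) (u : ℤ → A) (j : ℤ) :
    IsLeast {s | Pa hne u s = j} (start σ u j) := by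
  constructor
  · exact Pa_eq hne u le_rfl (start_lt_succ hne u j)
  · intro s hs
    obtain ⟨h1, _⟩ := Pa_spec hne u s
    rw [hs] at h1
    exact h1

lemma isGreatest_fiber (hne : ∀ a, σ a ≠ []) (u : ℤ → A) (j : ℤ) :
    IsGreatest {s | Pa hne u s = j} (start σ u (j + 1) - 1) := by
  constructor
  · exact Pa_eq hne u (by have := start_lt_succ hne u j; omega) (by omega)
  · intro s hs
    obtain ⟨_, h2⟩ := Pa_spec hne u s
    rw [hs] at h2
    omega

lemma produces_Im (hne : ∀ a, σ a ≠ []) (u : ℤ → A) :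
    Produces σ u (Im hne u) (Pa hne u) := by
  refine ⟨Pa_monotone hne u, Pa_surjective hne u, ?_⟩
  intro j m M hm hM
  have hmeq : m = start σ u j := hm.unique (isLeast_fiber hne u j)
  have hMeq : M = start σ u (j + 1) - 1 := hM.unique (isGreatest_fiber hne u j)
  subst hmeq hMeq
  constructor
  · have := start_succ σ u j
    omega
  · intro t h1 h2
    exact Im_eq hne u h1 (by omega)

end Start


section Windows

variable {σ : A → List A}

/-- the window `v 0, v 1, ..., v (n-1)` -/
def rlist (v : ℤ → A) (n : ℕ) : List A := (List.range n).map fun i : ℕ => v (i : ℤ)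

/-- the window `v (-1), v (-2), ..., v (-n)` -/
def llist (v : ℤ → A) (n : ℕ) : List A := (List.range n).map fun i : ℕ => v (-1 - (i : ℤ))

lemma rlist_length (v : ℤ → A) (n : ℕ) : (rlist v n).length = n := by
  rw [rlist, List.length_map, List.length_range]

lemma llist_length (v : ℤ → A) (n : ℕ) : (llist v n).length = n := by
  rw [llist, List.length_map, List.length_range]

lemma rlist_getElem (v : ℤ → A) {n i : ℕ} (h : i < (rlist v n).length) :
    (rlist v n)[i] = v (i : ℤ) := by
  simp only [rlist, List.getElem_map, List.getElem_range]

lemma llist_getElem (v : ℤ → A) {n i : ℕ} (h : i < (llist v n).length) :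
    (llist v n)[i] = v (-1 - (i : ℤ)) := by
  simp only [llist, List.getElem_map, List.getElem_range]

lemma rlist_succ (v : ℤ → A) (n : ℕ) : rlist v (n + 1) = rlist v n ++ [v (n : ℤ)] := by
  simp [rlist, List.range_succ]

lemma llist_succ (v : ℤ → A) (n : ℕ) :
    llist v (n + 1) = llist v n ++ [v (-1 - (n : ℤ))] := by
  simp [llist, List.range_succ]

lemma rlist_add (v : ℤ → A) (m ℓ : ℕ) :
    rlist v (m + ℓ) = rlist v m ++ (List.range ℓ).map fun i : ℕ => v ((m : ℤ) + (i : ℤ)) := by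
  rw [rlist, List.range_add, List.map_append, List.map_map, rlist]
  congr 1

lemma llist_add (v : ℤ → A) (m ℓ : ℕ) :
    llist v (m + ℓ) = llist v m ++ (List.range ℓ).map fun i : ℕ => v (-1 - ((m : ℤ) + (i : ℤ))) := by
  rw [llist, List.range_add, List.map_append, List.map_map, llist]
  congr 1

lemma B_singleton (σ : A → List A) (x : A) : B σ [x] = σ x := by simp [B]

lemma len_B_rlist (u : ℤ → A) (n : ℕ) :
    ((B σ (rlist u n)).length : ℤ) = start σ u n := by
  induction n with
  | zero => simp [rlist, B_nil, start_zero]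
  | succ n ih =>
    rw [rlist_succ, B_append, B_singleton, List.length_append]
    push_cast
    rw [ih, start_succ]

lemma len_B_llist (u : ℤ → A) (n : ℕ) :
    ((B (σrev σ) (llist u n)).length : ℤ) = - start σ u (-(n : ℤ)) := by
  induction n with
  | zero => simp [llist, B_nil, start_zero]
  | succ n ih =>
    rw [llist_succ, B_append, B_singleton, List.length_append]
    push_cast
    rw [ih]
    have h1 := start_succ σ u (-(n : ℤ) - 1)
    have h2 : (-(n:ℤ) - 1) + 1 = -(n:ℤ) := by ring
    rw [h2] at h1
    have h3 : -((n:ℤ) + 1) = -(n:ℤ) - 1 := by ring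
    rw [h3, h1]
    simp [σrev]
    ring

lemma rbase (hne : ∀ a, σ a ≠ []) (u : ℤ → A) (n : ℕ) :
    rlist (Im hne u) (B σ (rlist u n)).length = B σ (rlist u n) := by
  induction n with
  | zero => simp [rlist, B_nil]
  | succ n ih =>
    rw [rlist_succ, B_append, B_singleton, List.length_append, rlist_add, ih]
    congr 1
    · have hm : ((B σ (rlist u n)).length : ℤ) = start σ u n := len_B_rlist u n
      set m := (B σ (rlist u n)).length with hmdef
      apply List.ext_getElem
      · simp
      · intro i h1 h2
        rw [List.getElem_map, List.getElem_range]
        have hi : i < (σ (u (n:ℤ))).length := by simpa using h2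
        have hstart : start σ u ((n:ℤ) + 1) = start σ u n + ((σ (u (n:ℤ))).length : ℤ) :=
          start_succ σ u n
        have key : Im hne u ((m : ℤ) + (i : ℤ)) =
            (σ (u (n:ℤ))).getD (((m:ℤ) + i - start σ u n).toNat) (u (n:ℤ)) :=
          Im_eq hne u (by omega) (by omega)
        rw [key]
        have : ((m:ℤ) + i - start σ u n).toNat = i := by omega
        rw [this, List.getD_eq_getElem _ _ hi]

lemma lbase (hne : ∀ a, σ a ≠ []) (u : ℤ → A) (n : ℕ) :
    llist (Im hne u) (B (σrev σ) (llist u n)).length = B (σrev σ) (llist u n) := by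
  induction n with
  | zero => simp [llist, B_nil]
  | succ n ih =>
    rw [llist_succ, B_append, B_singleton, List.length_append, llist_add, ih]
    congr 1
    · have hm : ((B (σrev σ) (llist u n)).length : ℤ) = - start σ u (-(n:ℤ)) :=
        len_B_llist u n
      set m := (B (σrev σ) (llist u n)).length with hmdef
      apply List.ext_getElem
      · simp [σrev]
      · intro i h1 h2
        rw [List.getElem_map, List.getElem_range]
        have hi : i < (σ (u (-1 - (n:ℤ)))).length := by
          rw [List.length_map, List.length_range] at h1
          simpa [σrev] using h1
        set ℓ := (σ (u (-1 - (n:ℤ)))).length with hl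
        have hstart : start σ u (-1 - (n:ℤ) + 1) = start σ u (-1 - (n:ℤ)) + (ℓ : ℤ) :=
          start_succ σ u _
        have hs2 : (-1 - (n:ℤ) + 1) = -(n:ℤ) := by ring
        rw [hs2] at hstart
        have key : Im hne u (-1 - ((m:ℤ) + (i:ℤ))) =
            (σ (u (-1 - (n:ℤ)))).getD ((-1 - ((m:ℤ) + i) - start σ u (-1 - (n:ℤ))).toNat)
              (u (-1 - (n:ℤ))) :=
          Im_eq hne u (by omega) (by rw [hs2]; omega)
        rw [key]
        have hidx : (-1 - ((m:ℤ) + i) - start σ u (-1 - (n:ℤ))).toNat = ℓ - 1 - i := by omega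
        rw [hidx, List.getD_eq_getElem _ _ (by omega)]
        simp only [σrev, List.getElem_reverse]
        rfl

lemma iterR (hne : ∀ a, σ a ≠ []) (u : ℤ → A) (n : ℕ) (m : ℕ) :
    rlist ((Im hne)^[m] u) ((B σ)^[m] (rlist u n)).length = (B σ)^[m] (rlist u n) := by
  induction m with
  | zero =>
    simp only [Function.iterate_zero, id_eq]
    rw [rlist_length]
  | succ m ih =>
    rw [Function.iterate_succ_apply', Function.iterate_succ_apply']
    have := rbase hne ((Im hne)^[m] u) ((B σ)^[m] (rlist u n)).length
    rwa [ih] at this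

lemma iterL (hne : ∀ a, σ a ≠ []) (u : ℤ → A) (n : ℕ) (m : ℕ) :
    llist ((Im hne)^[m] u) ((B (σrev σ))^[m] (llist u n)).length
      = (B (σrev σ))^[m] (llist u n) := by
  induction m with
  | zero =>
    simp only [Function.iterate_zero, id_eq]
    rw [llist_length]
  | succ m ih =>
    rw [Function.iterate_succ_apply', Function.iterate_succ_apply']
    have := lbase hne ((Im hne)^[m] u) ((B (σrev σ))^[m] (llist u n)).length
    rwa [ih] at this

end Windows

section FixedWord

variable {σ : A → List A}

/-- the one-sided fixed word generated by `c`, where `(B σ)^[k] [c] = c :: (nonempty)`. -/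
noncomputable def Rw (σ : A → List A) (k : ℕ) (c : A) (t : ℕ) : A :=
  ((B σ)^[(t + 1) * k] [c]).getD t c

lemma chain (hne : ∀ a, σ a ≠ []) {k : ℕ} {c : A} {l₀ : List A}
    (hc : (B σ)^[k] [c] = c :: l₀) (hl₀ : l₀ ≠ []) (n : ℕ) :
    (B σ)^[n * k] [c] <+: (B σ)^[(n + 1) * k] [c] ∧ n < ((B σ)^[n * k] [c]).length := by
  have hdec : ∀ m : ℕ, (B σ)^[(m + 1) * k] [c]
      = (B σ)^[m * k] [c] ++ (B σ)^[m * k] l₀ := by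
    intro m
    have h1 : (m + 1) * k = m * k + k := by ring
    rw [h1, Function.iterate_add_apply, hc,
      show (c :: l₀) = [c] ++ l₀ from rfl, B_iter_append]
  induction n with
  | zero => exact ⟨⟨(B σ)^[0 * k] l₀, (hdec 0).symm⟩, by simp⟩
  | succ n ih =>
    obtain ⟨⟨r, hr⟩, hlen⟩ := ih
    constructor
    · exact ⟨(B σ)^[(n+1) * k] l₀, (hdec (n+1)).symm⟩
    · rw [hdec n]
      rw [List.length_append]
      have : (B σ)^[n * k] l₀ ≠ [] := B_iter_ne hne _ hl₀
      have : 0 < ((B σ)^[n * k] l₀).length := List.length_pos_iff.mpr this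
      omega

lemma chain' (hne : ∀ a, σ a ≠ []) {k : ℕ} {c : A} {l₀ : List A}
    (hc : (B σ)^[k] [c] = c :: l₀) (hl₀ : l₀ ≠ []) {n n' : ℕ} (h : n ≤ n') :
    (B σ)^[n * k] [c] <+: (B σ)^[n' * k] [c] := by
  induction n', h using Nat.le_induction with
  | base => exact List.prefix_refl _
  | succ n' hn ih => exact ih.trans (chain hne hc hl₀ n').1

lemma stab (hne : ∀ a, σ a ≠ []) {k : ℕ} {c : A} {l₀ : List A}
    (hc : (B σ)^[k] [c] = c :: l₀) (hl₀ : l₀ ≠ []) {t n : ℕ} (h : t < n) :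
    ((B σ)^[n * k] [c]).getD t c = Rw σ k c t := by
  rw [Rw]
  obtain ⟨r, hr⟩ := chain' hne hc hl₀ (show t + 1 ≤ n from h)
  rw [← hr]
  have hlen : t < ((B σ)^[(t + 1) * k] [c]).length := (chain hne hc hl₀ (t+1)).2.trans_le' (by omega)
  rw [List.getD_append _ _ _ _ hlen]

/-- the right window of `Rw` is a prefix of the chain. -/
lemma rwindow_take (hne : ∀ a, σ a ≠ []) {k : ℕ} {c : A} {l₀ : List A}
    (hc : (B σ)^[k] [c] = c :: l₀) (hl₀ : l₀ ≠ []) (u : ℤ → A)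
    (hu : ∀ i : ℕ, u (i : ℤ) = Rw σ k c i) (n : ℕ) :
    rlist u n = ((B σ)^[n * k] [c]).take n := by
  have hlen : n ≤ ((B σ)^[n * k] [c]).length := (chain hne hc hl₀ n).2.le
  apply List.ext_getElem
  · rw [rlist_length, List.length_take]
    omega
  · intro i h1 h2
    rw [rlist_length] at h1
    rw [List.getElem_take]
    rw [rlist_getElem u (by rw [rlist_length]; exact h1), hu i]
    rw [← stab hne hc hl₀ h1, List.getD_eq_getElem _ _ (by omega)]

/-- main right-half fixed point computation -/
lemma fix_right (hne : ∀ a, σ a ≠ []) {k : ℕ} {c : A} {l₀ : List A}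
    (hc : (B σ)^[k] [c] = c :: l₀) (hl₀ : l₀ ≠ []) (u : ℤ → A)
    (hu : ∀ i : ℕ, u (i : ℤ) = Rw σ k c i) (s : ℕ) :
    (Im hne)^[k] u (s : ℤ) = Rw σ k c s := by
  set n := s + 1 with hn
  have hwin : rlist u n = ((B σ)^[n * k] [c]).take n := rwindow_take hne hc hl₀ u hu n
  set l := (B σ)^[k] (rlist u n) with hl
  have hiter := iterR hne u n k
  rw [← hl] at hiter
  have hlenl : n ≤ l.length := by
    have h1 := length_le_B_iter hne k (rlist u n)
    rw [rlist_length] at h1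
    rw [hl]; exact h1
  have hpre : l <+: (B σ)^[(n + 1) * k] [c] := by
    have h1 : (B σ)^[k] ((B σ)^[n*k] [c]) = (B σ)^[(n+1) * k] [c] := by
      rw [← Function.iterate_add_apply]
      congr 1
      ring
    rw [hl, hwin, ← h1]
    exact B_iter_prefix σ k (List.take_prefix _ _)
  have hs : s < l.length := by omega
  have hs' : s < (rlist ((Im hne)^[k] u) l.length).length := by rw [rlist_length]; omega
  have hval : (Im hne)^[k] u (s : ℤ) = l[s] := by
    rw [← rlist_getElem ((Im hne)^[k] u) hs']
    simp only [hiter]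
  rw [hval]
  have hs2 : s < ((B σ)^[(n + 1) * k] [c]).length := lt_of_lt_of_le hs hpre.length_le
  have h3 : l[s] = ((B σ)^[(n + 1) * k] [c])[s] := by
    obtain ⟨r, hr⟩ := hpre
    rw [← List.getD_eq_getElem l c hs, ← List.getD_eq_getElem _ c hs2, ← hr,
      List.getD_append _ _ _ _ hs]
  rw [h3, ← List.getD_eq_getElem _ c hs2]
  exact stab hne hc hl₀ (by omega)

/-- the left window of a word matching `Rw (σrev σ)` -/
lemma lwindow_take (hne : ∀ a, σ a ≠ []) {k : ℕ} {d : A} {l₀ : List A}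
    (hd : (B (σrev σ))^[k] [d] = d :: l₀) (hl₀ : l₀ ≠ []) (u : ℤ → A)
    (hu : ∀ i : ℕ, u (-1 - (i : ℤ)) = Rw (σrev σ) k d i) (n : ℕ) :
    llist u n = ((B (σrev σ))^[n * k] [d]).take n := by
  have hne' := hne_rev hne
  have hlen : n ≤ ((B (σrev σ))^[n * k] [d]).length := (chain hne' hd hl₀ n).2.le
  apply List.ext_getElem
  · rw [llist_length, List.length_take]
    omega
  · intro i h1 h2
    rw [llist_length] at h1
    rw [List.getElem_take]
    rw [llist_getElem u (by rw [llist_length]; exact h1), hu i]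
    rw [← stab hne' hd hl₀ h1, List.getD_eq_getElem _ _ (by omega)]

/-- main left-half fixed point computation -/
lemma fix_left (hne : ∀ a, σ a ≠ []) {k : ℕ} {d : A} {l₀ : List A}
    (hd : (B (σrev σ))^[k] [d] = d :: l₀) (hl₀ : l₀ ≠ []) (u : ℤ → A)
    (hu : ∀ i : ℕ, u (-1 - (i : ℤ)) = Rw (σrev σ) k d i) (s : ℕ) :
    (Im hne)^[k] u (-1 - (s : ℤ)) = Rw (σrev σ) k d s := by
  have hne' := hne_rev hne
  set n := s + 1 with hn
  have hwin : llist u n = ((B (σrev σ))^[n * k] [d]).take n := lwindow_take hne hd hl₀ u hu n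
  set l := (B (σrev σ))^[k] (llist u n) with hl
  have hiter := iterL hne u n k
  rw [← hl] at hiter
  have hlenl : n ≤ l.length := by
    have h1 := length_le_B_iter hne' k (llist u n)
    rw [llist_length] at h1
    rw [hl]; exact h1
  have hpre : l <+: (B (σrev σ))^[(n + 1) * k] [d] := by
    have h1 : (B (σrev σ))^[k] ((B (σrev σ))^[n*k] [d]) = (B (σrev σ))^[(n+1) * k] [d] := by
      rw [← Function.iterate_add_apply]
      congr 1
      ring
    rw [hl, hwin, ← h1]
    exact B_iter_prefix (σrev σ) k (List.take_prefix _ _)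
  have hs : s < l.length := by omega
  have hs' : s < (llist ((Im hne)^[k] u) l.length).length := by rw [llist_length]; omega
  have hval : (Im hne)^[k] u (-1 - (s : ℤ)) = l[s] := by
    rw [← llist_getElem ((Im hne)^[k] u) hs']
    simp only [hiter]
  rw [hval]
  have hs2 : s < ((B (σrev σ))^[(n + 1) * k] [d]).length := lt_of_lt_of_le hs hpre.length_le
  have h3 : l[s] = ((B (σrev σ))^[(n + 1) * k] [d])[s] := by
    obtain ⟨r, hr⟩ := hpre
    rw [← List.getD_eq_getElem l d hs, ← List.getD_eq_getElem _ d hs2, ← hr,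
      List.getD_append _ _ _ _ hs]
  rw [h3, ← List.getD_eq_getElem _ d hs2]
  exact stab hne' hd hl₀ (by omega)

end FixedWord

section Seed

variable {σ : A → List A}

lemma head?_B [Inhabited A] (hne : ∀ a, σ a ≠ []) {l : List A} {x : A}
    (h : l.head? = some x) : (B σ l).head? = some (σ x).headI := by
  cases l with
  | nil => simp at h
  | cons y ys =>
    simp only [List.head?_cons, Option.some.injEq] at h
    rw [B_cons, ← h]
    cases e : σ y with
    | nil => exact absurd e (hne y)
    | cons z zs => simp [e]

lemma head?_B_iter [Inhabited A] (hne : ∀ a, σ a ≠ []) (n : ℕ) (a : A) :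
    ((B σ)^[n] [a]).head? = some ((fun x => (σ x).headI)^[n] a) := by
  induction n with
  | zero => simp
  | succ n ih =>
    rw [Function.iterate_succ_apply', Function.iterate_succ_apply']
    exact head?_B hne ih

lemma exists_periodic [Finite A] [Nonempty A] (f : A → A) :
    ∃ c p, 0 < p ∧ f^[p] c = c := by
  obtain ⟨i, j, hij, h⟩ :=
    Finite.exists_ne_map_eq_of_infinite (fun n : ℕ => f^[n] (Classical.arbitrary A))
  rcases lt_or_gt_of_ne hij with hlt | hlt
  · exact ⟨f^[i] (Classical.arbitrary A), j - i, by omega, by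
      rw [← Function.iterate_add_apply]
      rw [show j - i + i = j by omega]
      exact h.symm⟩
  · exact ⟨f^[j] (Classical.arbitrary A), i - j, by omega, by
      rw [← Function.iterate_add_apply]
      rw [show i - j + j = i by omega]
      exact h⟩

end Seed

end OrbitProof

open OrbitProof

/-- A primitive symbolic substitution system with an expanding letter admits an
orbit. -/
theorem orbit_exists {A : Type*} [Fintype A] [Nonempty A]
    (σ : A → List A)
    (hprim : ∃ N : ℕ, ∀ m : ℕ, N < m → ∀ a b : A,
      b ∈ (fun u => u.flatMap σ)^[m] [a])
    (hexp : ∃ a : A, 1 < (σ a).length) :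
    ∃ (ω : ℤ → ℤ → A) (P : ℤ → ℤ → ℤ),
      ∀ i : ℤ, Produces σ (ω i) (ω (i + 1)) (P i) := by
  classical
  letI : Inhabited A := Classical.inhabited_of_nonempty inferInstance
  obtain ⟨N, hN⟩ := hprim
  obtain ⟨a, ha⟩ := hexp
  have hBdef : (fun u : List A => u.flatMap σ) = B σ := rfl
  rw [hBdef] at hN
  -- no letter maps to the empty word
  have hne : ∀ x : A, σ x ≠ [] := by
    intro x h
    have hmem := hN (N + 1) (by omega) x (Classical.arbitrary A)
    have hnil : (B σ)^[N + 1] [x] = [] := by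
      rw [Function.iterate_succ_apply, show B σ [x] = σ x from B_singleton σ x, h]
      exact Function.iterate_fixed (B_nil σ) N
    rw [hnil] at hmem
    simp at hmem
  have hne' := hne_rev hne
  -- long iterates have length at least 2
  have len2 : ∀ m : ℕ, N + 2 ≤ m → ∀ x : A, 2 ≤ ((B σ)^[m] [x]).length := by
    intro m hm x
    have hdecomp : (B σ)^[m] [x] = B σ ((B σ)^[m - 1] [x]) := by
      have h1 := Function.iterate_succ_apply' (B σ) (m - 1) [x]
      rw [show (m - 1).succ = m by omega] at h1
      exact h1
    have hmem : a ∈ (B σ)^[m - 1] [x] := hN (m - 1) (by omega) x a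
    have := length_B_ge_of_mem hne hmem
    rw [hdecomp]
    omega
  -- periodic seed letters
  obtain ⟨c, p, hp, hpc⟩ := exists_periodic (fun x => (σ x).headI)
  obtain ⟨d, q, hq, hqd⟩ := exists_periodic (fun x => (σrev σ x).headI)
  set k := p * q * (N + 2) with hkdef
  have hk0 : 0 < k := by positivity
  have hkN : N + 2 ≤ k := by
    calc N + 2 = 1 * 1 * (N + 2) := by ring
    _ ≤ p * q * (N + 2) := by
        apply Nat.mul_le_mul_right
        exact Nat.mul_le_mul hp hq
  have hkc : (fun x => (σ x).headI)^[k] c = c := by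
    rw [show k = p * (q * (N + 2)) by ring, Function.iterate_mul]
    exact Function.iterate_fixed hpc _
  have hkd : (fun x => (σrev σ x).headI)^[k] d = d := by
    rw [show k = q * (p * (N + 2)) by ring, Function.iterate_mul]
    exact Function.iterate_fixed hqd _
  -- the expanded seeds
  have hlenc : 2 ≤ ((B σ)^[k] [c]).length := len2 k hkN c
  have hlend : 2 ≤ ((B (σrev σ))^[k] [d]).length := by
    have hrev : (B (σrev σ))^[k] [d] = ((B σ)^[k] [d]).reverse := by
      have := B_iter_rev (σ := σ) k [d]
      simpa using this
    rw [hrev, List.length_reverse]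
    exact len2 k hkN d
  obtain ⟨lc, hc, hlc⟩ : ∃ lc, (B σ)^[k] [c] = c :: lc ∧ lc ≠ [] := by
    have hh := head?_B_iter hne k c
    rw [hkc] at hh
    cases e : (B σ)^[k] [c] with
    | nil => rw [e] at hh; simp at hh
    | cons y ys =>
      rw [e] at hh hlenc
      simp only [List.head?_cons, Option.some.injEq] at hh
      refine ⟨ys, by rw [hh], ?_⟩
      intro hys
      rw [hys] at hlenc
      simp at hlenc
  obtain ⟨ld, hd, hld⟩ : ∃ ld, (B (σrev σ))^[k] [d] = d :: ld ∧ ld ≠ [] := by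
    have hh := head?_B_iter hne' k d
    rw [hkd] at hh
    cases e : (B (σrev σ))^[k] [d] with
    | nil => rw [e] at hh; simp at hh
    | cons y ys =>
      rw [e] at hh hlend
      simp only [List.head?_cons, Option.some.injEq] at hh
      refine ⟨ys, by rw [hh], ?_⟩
      intro hys
      rw [hys] at hlend
      simp at hlend
  -- the fixed bi-infinite word
  set ω₀ : ℤ → A := fun t => if 0 ≤ t then Rw σ k c t.toNat
    else Rw (σrev σ) k d (-1 - t).toNat with hω₀
  have huR : ∀ i : ℕ, ω₀ (i : ℤ) = Rw σ k c i := by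
    intro i
    rw [hω₀]
    simp only [Int.natCast_nonneg, if_pos, Int.toNat_natCast]
  have huL : ∀ i : ℕ, ω₀ (-1 - (i : ℤ)) = Rw (σrev σ) k d i := by
    intro i
    rw [hω₀]
    simp only
    rw [if_neg (by omega)]
    congr 1
    omega
  have hfix : (Im hne)^[k] ω₀ = ω₀ := by
    funext t
    rcases le_or_gt 0 t with h | h
    · have h2 := fix_right hne hc hlc ω₀ huR t.toNat
      rw [Int.toNat_of_nonneg h] at h2
      rw [h2]
      simp only [hω₀]
      rw [if_pos h]
    · have h2 := fix_left hne hd hld ω₀ huL (-1 - t).toNat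
      rw [show (-1 - ((-1 - t).toNat : ℤ)) = t by omega] at h2
      rw [h2]
      simp only [hω₀]
      rw [if_neg (by omega)]
  clear_value k
  clear hkdef hkc hkd hlenc hlend len2 hN
  -- the orbit
  refine ⟨fun i => (Im hne)^[(i % (k : ℤ)).toNat] ω₀,
    fun i => Pa hne ((Im hne)^[(i % (k : ℤ)).toNat] ω₀), fun i => ?_⟩
  have hstep : (Im hne)^[((i + 1) % (k : ℤ)).toNat] ω₀
      = Im hne ((Im hne)^[(i % (k : ℤ)).toNat] ω₀) := by
    have hk1 : (1 : ℤ) < (k : ℤ) := by exact_mod_cast (by omega : 1 < k)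
    have hr0 : 0 ≤ i % (k : ℤ) := Int.emod_nonneg i (by omega)
    have hrk : i % (k : ℤ) < (k : ℤ) := Int.emod_lt_of_pos i (by omega)
    have hmod : (i + 1) % (k : ℤ) = (i % (k : ℤ) + 1) % (k : ℤ) := by
      conv_lhs => rw [Int.add_emod]
      rw [Int.emod_eq_of_lt (by omega) hk1]
    have hcase : ((i + 1) % (k : ℤ)).toNat = (i % (k : ℤ)).toNat + 1 ∨
        (((i + 1) % (k : ℤ)).toNat = 0 ∧ (i % (k : ℤ)).toNat + 1 = k) := by
      rcases (by omega : i % (k : ℤ) + 1 < (k : ℤ) ∨ i % (k : ℤ) + 1 = (k : ℤ)) with h' | h'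
      · left
        rw [hmod, Int.emod_eq_of_lt (by omega) h']
        omega
      · right
        rw [hmod, h', Int.emod_self]
        omega
    rcases hcase with hc1 | ⟨hc1, hc2⟩
    · rw [hc1, Function.iterate_succ_apply']
    · rw [hc1, Function.iterate_zero, id_eq]
      conv_lhs => rw [← hfix, ← hc2, Function.iterate_succ_apply']
  show Produces σ ((Im hne)^[(i % (k : ℤ)).toNat] ω₀)
    ((Im hne)^[((i + 1) % (k : ℤ)).toNat] ω₀)
    (Pa hne ((Im hne)^[(i % (k : ℤ)).toNat] ω₀))
  rw [hstep]
  exact produces_Im hne _
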